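/- Let C be a cartesian category and let g : X ⟶ Y and f : Y ⟶ Z be composable morphisms of C. If both the composite f ∘ g and g are effective descent morphisms, then f is an effective descent morphism. -/

import Mathlib

open CategoryTheory Limits

universe v₁ v₂ v₃ u₁ u₂ u₃

section Aux

variable {A : Type u₁} {B : Type u₂} {E : Type u₃}
variable [Category.{v₁} A] [Category.{v₂} B] [Category.{v₃} E]

/-- Transfer a split coequalizer along isomorphisms of the two objects. -/
def CategoryTheory.IsSplitCoequalizer.ofIsos {X₁ Y₁ X₂ Y₂ Z : A}
    {f₁ g₁ : X₁ ⟶ Y₁} {π : Y₁ ⟶ Z} (q : IsSplitCoequalizer f₁ g₁ π)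
    (i : X₁ ≅ X₂) (j : Y₁ ≅ Y₂) :
    IsSplitCoequalizer (i.inv ≫ f₁ ≫ j.hom) (i.inv ≫ g₁ ≫ j.hom) (j.inv ≫ π) where
  rightSection := q.rightSection ≫ j.hom
  leftSection := j.inv ≫ q.leftSection ≫ i.hom
  condition := by simp [q.condition]
  rightSection_π := by simp
  leftSection_bottom := by simp
  leftSection_top := by simp [q.leftSection_top_assoc]

/-- Having a split pair transfers along natural isomorphisms. -/
lemma CategoryTheory.Functor.isSplitPair_of_natIso {K H : A ⥤ E} (ι : K ≅ H)
    {X Y : A} (f g : X ⟶ Y) [K.IsSplitPair f g] : H.IsSplitPair f g := by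
  obtain ⟨Z, π, ⟨q⟩⟩ := (inferInstance : HasSplitCoequalizer (K.map f) (K.map g)).splittable
  refine ⟨⟨Z, (ι.app Y).inv ≫ π, ⟨?_⟩⟩⟩
  have hf : H.map f = (ι.app X).inv ≫ K.map f ≫ (ι.app Y).hom := by simp
  have hg : H.map g = (ι.app X).inv ≫ K.map g ≫ (ι.app Y).hom := by simp
  rw [hf, hg]
  exact q.ofIsos (ι.app X) (ι.app Y)

/-- Reflecting isomorphisms transfers along natural isomorphisms. -/
lemma CategoryTheory.Functor.reflectsIsomorphisms_of_natIso {K H : A ⥤ E} (ι : K ≅ H)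
    [K.ReflectsIsomorphisms] : H.ReflectsIsomorphisms where
  reflects f hf := by
    have : IsIso (K.map f) := by rw [NatIso.isIso_map_iff ι]; exact hf
    exact isIso_of_reflects_iso f K

end Aux

section Cancel

variable {A : Type u₁} {B : Type u₂} {E : Type u₂}
variable [Category.{v₁} A] [Category.{v₁} B] [Category.{v₁} E]

/-- If `G₁ ⋙ G₂` is (isomorphic to) a monadic functor, `G₂` is monadic, and `G₁` has a left
adjoint, then `G₁` is monadic. -/
noncomputable def CategoryTheory.Monad.monadicOfCompOfNatIso {G₁ : A ⥤ B} {G₂ : B ⥤ E}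
    {H : A ⥤ E} (ι : G₁ ⋙ G₂ ≅ H) {F₁ : B ⥤ A} (adj : F₁ ⊣ G₁)
    [MonadicRightAdjoint H] [MonadicRightAdjoint G₂] : MonadicRightAdjoint G₁ := by
  -- `H` reflects isomorphisms since it is monadic.
  have hH : H.ReflectsIsomorphisms := by
    have : (Monad.comparison (monadicAdjunction H) ⋙
        (monadicAdjunction H).toMonad.forget).ReflectsIsomorphisms :=
      reflectsIsomorphisms_comp _ _
    exact Functor.reflectsIsomorphisms_of_natIso (Monad.comparisonForget (monadicAdjunction H))
  have hG₂ : G₂.ReflectsIsomorphisms := by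
    have : (Monad.comparison (monadicAdjunction G₂) ⋙
        (monadicAdjunction G₂).toMonad.forget).ReflectsIsomorphisms :=
      reflectsIsomorphisms_comp _ _
    exact Functor.reflectsIsomorphisms_of_natIso (Monad.comparisonForget (monadicAdjunction G₂))
  have hK : (G₁ ⋙ G₂).ReflectsIsomorphisms := Functor.reflectsIsomorphisms_of_natIso ι.symm
  have hG₁ : G₁.ReflectsIsomorphisms := reflectsIsomorphisms_of_comp G₁ G₂
  -- For any `G₁`-split pair, `G₁ ⋙ G₂` and hence `H` makes it a split pair.
  have hco : Monad.HasCoequalizerOfIsSplitPair G₁ := by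
    constructor
    intro X Y f g hfg
    have h₁ : (G₁ ⋙ G₂).IsSplitPair f g :=
      inferInstanceAs (HasSplitCoequalizer (G₂.map (G₁.map f)) (G₂.map (G₁.map g)))
    have h₂ : H.IsSplitPair f g := Functor.isSplitPair_of_natIso ι f g
    have h₃ : CreatesColimit (parallelPair f g) H :=
      Monad.createsGSplitCoequalizersOfMonadic H f g
    have h₄ : HasColimit (parallelPair f g ⋙ H) := by
      apply @hasColimit_of_iso _ _ _ _ _ _ ?_ (diagramIsoParallelPair.{v₁} _)
      exact inferInstanceAs <| HasCoequalizer (H.map f) (H.map g)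
    exact hasColimit_of_created (parallelPair f g) H
  have hpres : Monad.PreservesColimitOfIsSplitPair G₁ := by
    constructor
    intro X Y f g hfg
    have h₁ : (G₁ ⋙ G₂).IsSplitPair f g :=
      inferInstanceAs (HasSplitCoequalizer (G₂.map (G₁.map f)) (G₂.map (G₁.map g)))
    have h₂ : H.IsSplitPair f g := Functor.isSplitPair_of_natIso ι f g
    have h₃ : CreatesColimit (parallelPair f g) H :=
      Monad.createsGSplitCoequalizersOfMonadic H f g
    have h₄ : HasColimit (parallelPair f g ⋙ H) := by
      apply @hasColimit_of_iso _ _ _ _ _ _ ?_ (diagramIsoParallelPair.{v₁} _)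
      exact inferInstanceAs <| HasCoequalizer (H.map f) (H.map g)
    have pH : PreservesColimit (parallelPair f g) H :=
      preservesColimit_of_createsColimit_and_hasColimit _ _
    have pK : PreservesColimit (parallelPair f g) (G₁ ⋙ G₂) :=
      preservesColimit_of_natIso _ ι.symm
    have hsp : G₂.IsSplitPair (G₁.map f) (G₁.map g) :=
      inferInstanceAs (HasSplitCoequalizer (G₂.map (G₁.map f)) (G₂.map (G₁.map g)))
    have cG₂ : CreatesColimit (parallelPair (G₁.map f) (G₁.map g)) G₂ :=
      Monad.createsGSplitCoequalizersOfMonadic G₂ (G₁.map f) (G₁.map g)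
    have rG₂' : ReflectsColimit (parallelPair (G₁.map f) (G₁.map g)) G₂ := inferInstance
    have rG₂ : ReflectsColimit (parallelPair f g ⋙ G₁) G₂ :=
      @reflectsColimit_of_iso_diagram _ _ _ _ _ _ _ _ G₂
        (diagramIsoParallelPair.{v₁} (parallelPair f g ⋙ G₁)).symm rG₂'
    exact preservesColimit_of_reflects_of_preserves G₁ G₂
  exact Monad.monadicOfHasPreservesGSplitCoequalizersOfReflectsIsomorphisms adj

end Cancel

/-- A morphism `f : X ⟶ Y` of a cartesian category is an effective descent morphism if the
pullback functor `f* : C/Y ⥤ C/X` is monadic. -/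
def EffectiveDescentMorphism {C : Type u₁} [Category.{v₁} C] [HasFiniteLimits C]
    {X Y : C} (f : X ⟶ Y) : Prop :=
  Nonempty (MonadicRightAdjoint (Over.pullback f))

/-- If `f ∘ g` and `g` are effective descent morphisms then so is `f`. -/
theorem effectiveDescentMorphism_of_comp
    {C : Type u₁} [Category.{v₁} C] [HasFiniteLimits C]
    {X Y Z : C} (g : X ⟶ Y) (f : Y ⟶ Z)
    (hgf : EffectiveDescentMorphism (g ≫ f)) (hg : EffectiveDescentMorphism g) :
    EffectiveDescentMorphism f := by
  obtain ⟨hgf⟩ := hgf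
  obtain ⟨hg⟩ := hg
  exact ⟨Monad.monadicOfCompOfNatIso (Over.pullbackComp g f).symm (Over.mapPullbackAdj f)⟩
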